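/- Let (x, x₁) be a Mannheim D-pair of type 1 in Minkowski 3-space with g = n₁ at corresponding points and T₁ = cosh θ·T - sinh θ·n, g₁ = -sinh θ·T + cosh θ·n. Then differentiating ⟨g, g₁⟩ = 0 with respect to s₁ yields τ_{g₁} = (-k_g·sinh θ + τ_g·cosh θ)·(ds/ds₁). -/

import Mathlib

noncomputable section

open Real

/-- Minkowski inner product on ℝ³: ⟨u,v⟩ = -u₁v₁ + u₂v₂ + u₃v₃. -/
def mink (u v : Fin 3 → ℝ) : ℝ := -(u 0 * v 0) + u 1 * v 1 + u 2 * v 2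

/-- Lorentzian cross product on Minkowski 3-space. -/
def lcross (u v : Fin 3 → ℝ) : Fin 3 → ℝ :=
  ![u 1 * v 2 - u 2 * v 1, u 0 * v 2 - u 2 * v 0, u 1 * v 0 - u 0 * v 1]

lemma mink_hasDerivAt {u v : ℝ → Fin 3 → ℝ} {u' v' : Fin 3 → ℝ} {s : ℝ}
    (hu : HasDerivAt u u' s) (hv : HasDerivAt v v' s) :
    HasDerivAt (fun t => mink (u t) (v t)) (mink u' (v s) + mink (u s) v') s := by
  have hu0 := (hasDerivAt_pi.mp hu) 0
  have hu1 := (hasDerivAt_pi.mp hu) 1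
  have hu2 := (hasDerivAt_pi.mp hu) 2
  have hv0 := (hasDerivAt_pi.mp hv) 0
  have hv1 := (hasDerivAt_pi.mp hv) 1
  have hv2 := (hasDerivAt_pi.mp hv) 2
  have := (((hu0.mul hv0).neg.add (hu1.mul hv1)).add (hu2.mul hv2))
  have hf : (fun t => mink (u t) (v t)) = ((-((fun x => u x 0) * fun x => v x 0) + (fun x => u x 1) * fun x => v x 1) + (fun x => u x 2) * fun x => v x 2) := by
    funext t; simp [mink]
  rw [hf]
  exact this.congr_deriv (by simp only [mink]; ring)

lemma mink_add_left (u v w : Fin 3 → ℝ) : mink (u + v) w = mink u w + mink v w := by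
  simp [mink]; ring

lemma mink_sub_left (u v w : Fin 3 → ℝ) : mink (u - v) w = mink u w - mink v w := by
  simp [mink]; ring

lemma mink_smul_left (a : ℝ) (u w : Fin 3 → ℝ) : mink (a • u) w = a * mink u w := by
  simp [mink]; ring

lemma mink_add_right (u v w : Fin 3 → ℝ) : mink w (u + v) = mink w u + mink w v := by
  simp [mink]; ring

lemma mink_smul_right (a : ℝ) (u w : Fin 3 → ℝ) : mink w (a • u) = a * mink w u := by
  simp [mink]; ring

lemma mink_comm (u v : Fin 3 → ℝ) : mink u v = mink v u := by
  simp [mink]; ring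

/-- Theorem 4.3 (iv): differentiating ⟨g,g₁⟩ = 0 gives
τ_{g₁} = (-k_g·sinh θ + τ_g·cosh θ)·(ds/ds₁).  Everything is a function of s₁. -/
theorem mannheim_type1_tg1_relation
    (T T₁ g g₁ n n₁ : ℝ → Fin 3 → ℝ)
    (kg kn τg kg₁ kn₁ τg₁ σ θ : ℝ → ℝ)
    (hT₁ : ∀ s, T₁ s = Real.cosh (θ s) • T s - Real.sinh (θ s) • n s)
    (hg₁ : ∀ s, g₁ s = (-Real.sinh (θ s)) • T s + Real.cosh (θ s) • n s)
    (hgn₁ : ∀ s, g s = n₁ s)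
    (hgg₁ : ∀ s, mink (g s) (g₁ s) = 0)
    (hgd : ∀ s, HasDerivAt g (σ s • ((-(kg s)) • T s + τg s • n s)) s)
    (hg₁d : ∀ s, HasDerivAt g₁ (kg₁ s • T₁ s + τg₁ s • n₁ s) s)
    (h1 : ∀ s, mink (T s) (T s) = 1) (h2 : ∀ s, mink (g s) (g s) = 1)
    (h3 : ∀ s, mink (n s) (n s) = -1)
    (h4 : ∀ s, mink (T s) (g s) = 0) (h5 : ∀ s, mink (T s) (n s) = 0)
    (h6 : ∀ s, mink (g s) (n s) = 0)
    (h7 : ∀ s, mink (T₁ s) (T₁ s) = 1) (h8 : ∀ s, mink (g₁ s) (g₁ s) = -1)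
    (h9 : ∀ s, mink (n₁ s) (n₁ s) = 1)
    (h10 : ∀ s, mink (T₁ s) (g₁ s) = 0) (h11 : ∀ s, mink (T₁ s) (n₁ s) = 0)
    (h12 : ∀ s, mink (g₁ s) (n₁ s) = 0) :
    ∀ s, τg₁ s = (-(kg s) * Real.sinh (θ s) + τg s * Real.cosh (θ s)) * σ s := by
  intro s
  have hD := mink_hasDerivAt (hgd s) (hg₁d s)
  have hC : (fun t => mink (g t) (g₁ t)) = fun _ => (0 : ℝ) := funext hgg₁
  have hzero : mink (σ s • ((-(kg s)) • T s + τg s • n s)) (g₁ s)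
      + mink (g s) (kg₁ s • T₁ s + τg₁ s • n₁ s) = 0 := by
    have := hD.unique (hC ▸ hasDerivAt_const s (0 : ℝ))
    exact this
  have hTg₁ : mink (T s) (g₁ s) = -Real.sinh (θ s) := by
    rw [hg₁ s, mink_add_right, mink_smul_right, mink_smul_right, h1, h5]; ring
  have hng₁ : mink (n s) (g₁ s) = -Real.cosh (θ s) := by
    rw [hg₁ s, mink_add_right, mink_smul_right, mink_smul_right,
      mink_comm (n s) (T s), h5, h3]; ring
  have hgT₁ : mink (g s) (T₁ s) = 0 := by
    rw [hgn₁ s, mink_comm, h11 s]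
  have hgn₁' : mink (g s) (n₁ s) = 1 := by rw [hgn₁ s, h9]
  rw [mink_smul_left, mink_add_left, mink_smul_left, mink_smul_left,
    mink_add_right, mink_smul_right, mink_smul_right,
    hTg₁, hng₁, hgT₁, hgn₁'] at hzero
  nlinarith [hzero]
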